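/- Let C be a d-dimensional copula with continuous partial derivatives ∂_pC on {u : u_p ∈ (0,1)} for each p, and let C^#(s,u) = sC(u). Define Γ(H^#)(s,u) = H^#(s, H⁻(u)) with H = H^#(1,·). Then Γ is Hadamard-differentiable at C^# tangentially to D₀^# = {α^# ∈ C([0,1]^{d+1}) : α^#(0,·)=0 and α^#(s,·) ∈ D₀ for all s ∈ (0,1]}, with derivative Γ'_{C^#}(α^#)(s,u) = α^#(s,u) − s·Σ_{p=1}^d ∂_pC(u)·α^#(1,u^{(p)}). -/

import Mathlib

open MeasureTheory Set Filter

/-- A `d`-dimensional copula. -/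
def IsCopula (d : ℕ) (C : (Fin d → ℝ) → ℝ) : Prop :=
  ∃ μ : Measure (Fin d → ℝ), IsProbabilityMeasure μ ∧
    (∀ p : Fin d, ∀ t ∈ Icc (0:ℝ) 1, μ {x | x p ≤ t} = ENNReal.ofReal t) ∧
    (∀ u, C u = (μ {x | ∀ p, x p ≤ u p}).toReal)

/-- The unit cube `[0,1]^d`. -/
def cube (d : ℕ) : Set (Fin d → ℝ) := Set.univ.pi fun _ => Icc 0 1

/-- `x^{(p)}`: all coordinates `1` except the `p`-th, which is `x`. -/
def margVec {d : ℕ} (p : Fin d) (s : ℝ) : Fin d → ℝ := Function.update (fun _ => 1) p s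

open Topology

lemma meas_margVec {d : ℕ} (ν : Measure (Fin d → ℝ))
    (hnull : ∀ j, ν {y | 1 < y j} = 0) (p : Fin d) (x : ℝ) :
    ν {y | ∀ j, y j ≤ margVec p x j} = ν {y | y p ≤ x} := by
  apply le_antisymm
  · exact measure_mono (fun y hy => by
      have := hy p
      simpa [margVec, Function.update_self] using this)
  · have hsub : {y : Fin d → ℝ | y p ≤ x} ⊆
        {y | ∀ j, y j ≤ margVec p x j} ∪ ⋃ j, {y | 1 < y j} := by
      intro y hy
      by_cases h : ∀ j, y j ≤ margVec p x j
      · exact Or.inl h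
      · push_neg at h
        obtain ⟨j, hj⟩ := h
        have hjp : j ≠ p := by
          intro he
          rw [he, show margVec p x p = x by simp [margVec]] at hj
          exact absurd hy (not_le.2 hj)
        refine Or.inr (mem_iUnion.2 ⟨j, ?_⟩)
        have h1 : margVec p x j = 1 := by simp [margVec, Function.update_of_ne hjp]
        rw [h1] at hj
        exact hj
    calc ν {y | y p ≤ x} ≤ ν ({y | ∀ j, y j ≤ margVec p x j} ∪ ⋃ j, {y | 1 < y j}) :=
          measure_mono hsub
      _ ≤ ν {y | ∀ j, y j ≤ margVec p x j} + ν (⋃ j, {y | 1 < y j}) := measure_union_le _ _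
      _ = ν {y | ∀ j, y j ≤ margVec p x j} := by
          rw [measure_iUnion_null (fun j => hnull j), add_zero]

lemma marg_null_top {d : ℕ} (μ : Measure (Fin d → ℝ)) [IsProbabilityMeasure μ]
    (hm : ∀ p : Fin d, ∀ t ∈ Icc (0:ℝ) 1, μ {x | x p ≤ t} = ENNReal.ofReal t) (j : Fin d) :
    μ {y | 1 < y j} = 0 := by
  have hms : MeasurableSet {y : Fin d → ℝ | y j ≤ 1} :=
    (measurable_pi_apply j) measurableSet_Iic
  have h1 : μ {y | y j ≤ 1} = 1 := by
    rw [hm j 1 (by norm_num)]; simp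
  have : {y : Fin d → ℝ | 1 < y j} = {y | y j ≤ 1}ᶜ := by
    ext y; simp [not_le]
  rw [this, measure_compl hms (measure_ne_top μ _), h1, measure_univ, tsub_self]

lemma marg_val {d : ℕ} (μ : Measure (Fin d → ℝ)) [IsProbabilityMeasure μ]
    (hm : ∀ p : Fin d, ∀ t ∈ Icc (0:ℝ) 1, μ {x | x p ≤ t} = ENNReal.ofReal t) (j : Fin d)
    (x : ℝ) : μ {y | y j ≤ x} = ENNReal.ofReal (min x 1) := by
  rcases le_or_gt x 0 with h | h
  · have h0 : μ {y : Fin d → ℝ | y j ≤ x} ≤ μ {y : Fin d → ℝ | y j ≤ 0} :=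
      measure_mono (fun y hy => le_trans hy h)
    rw [hm j 0 (by norm_num)] at h0
    simp only [ENNReal.ofReal_zero, le_zero_iff] at h0
    rw [h0, min_eq_left (le_trans h zero_le_one), ENNReal.ofReal_eq_zero.2 h]
  · rcases le_or_gt x 1 with h1 | h1
    · rw [hm j x ⟨le_of_lt h, h1⟩, min_eq_left h1]
    · have hle : μ {y : Fin d → ℝ | y j ≤ x} ≤ 1 := prob_le_one
      have hge : μ {y : Fin d → ℝ | y j ≤ 1} ≤ μ {y : Fin d → ℝ | y j ≤ x} :=
        measure_mono (fun y hy => le_trans hy (le_of_lt h1))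
      rw [hm j 1 (by norm_num)] at hge
      simp only [ENNReal.ofReal_one] at hge
      rw [min_eq_right (le_of_lt h1), ENNReal.ofReal_one, le_antisymm hle hge]

lemma Sset_mono {d : ℕ} {a b : Fin d → ℝ} (h : ∀ j, a j ≤ b j) :
    {y : Fin d → ℝ | ∀ j, y j ≤ a j} ⊆ {y | ∀ j, y j ≤ b j} :=
  fun y hy j => le_trans (hy j) (h j)

lemma Sset_meas {d : ℕ} (a : Fin d → ℝ) :
    MeasurableSet {y : Fin d → ℝ | ∀ j, y j ≤ a j} := by
  have : {y : Fin d → ℝ | ∀ j, y j ≤ a j} = ⋂ j, {y | y j ≤ a j} := by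
    ext y; simp
  rw [this]
  exact MeasurableSet.iInter (fun j => (measurable_pi_apply j) measurableSet_Iic)

lemma cop_margin {d : ℕ} {C : (Fin d → ℝ) → ℝ} (μ : Measure (Fin d → ℝ))
    [IsProbabilityMeasure μ]
    (hm : ∀ p : Fin d, ∀ t ∈ Icc (0:ℝ) 1, μ {x | x p ≤ t} = ENNReal.ofReal t)
    (hrep : ∀ u, C u = (μ {x | ∀ p, x p ≤ u p}).toReal)
    (p : Fin d) {x : ℝ} (hx : x ∈ Icc (0:ℝ) 1) : C (margVec p x) = x := by
  rw [hrep, meas_margVec μ (marg_null_top μ hm) p x, marg_val μ hm p x,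
    min_eq_left hx.2, ENNReal.toReal_ofReal hx.1]

lemma cop_mono {d : ℕ} {C : (Fin d → ℝ) → ℝ} (μ : Measure (Fin d → ℝ))
    [IsProbabilityMeasure μ]
    (hrep : ∀ u, C u = (μ {x | ∀ p, x p ≤ u p}).toReal)
    {a b : Fin d → ℝ} (h : ∀ j, a j ≤ b j) : C a ≤ C b := by
  rw [hrep, hrep]
  exact ENNReal.toReal_mono (measure_ne_top μ _) (measure_mono (Sset_mono h))

lemma cop_lip {d : ℕ} {C : (Fin d → ℝ) → ℝ} (μ : Measure (Fin d → ℝ))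
    [IsProbabilityMeasure μ]
    (hm : ∀ p : Fin d, ∀ t ∈ Icc (0:ℝ) 1, μ {x | x p ≤ t} = ENNReal.ofReal t)
    (hrep : ∀ u, C u = (μ {x | ∀ p, x p ≤ u p}).toReal)
    (u : Fin d → ℝ) (p : Fin d) {a b : ℝ} (hab : a ≤ b) :
    C (Function.update u p b) - C (Function.update u p a) ≤ b - a := by
  set A := {y : Fin d → ℝ | ∀ j, y j ≤ Function.update u p a j} with hA
  set B := {y : Fin d → ℝ | ∀ j, y j ≤ Function.update u p b j} with hB
  have hAB : A ⊆ B := Sset_mono (fun j => by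
    rcases eq_or_ne j p with rfl | hj
    · simpa using hab
    · simp [Function.update_of_ne hj])
  have hdiff : B \ A ⊆ {y | y p ≤ b} \ {y | y p ≤ a} := by
    intro y ⟨hyB, hyA⟩
    constructor
    · have := hyB p; simpa using this
    · intro hya
      apply hyA
      intro j
      rcases eq_or_ne j p with rfl | hj
      · simpa using hya
      · have := hyB j; simpa [Function.update_of_ne hj] using this
  have hmB : μ B = μ A + μ (B \ A) := by
    rw [measure_add_diff (Sset_meas _).nullMeasurableSet B, Set.union_eq_self_of_subset_left hAB]
  have hmeasle : μ (B \ A) ≤ ENNReal.ofReal (b - a) := by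
    have h2 : μ ({y : Fin d → ℝ | y p ≤ b} \ {y | y p ≤ a}) =
        μ {y : Fin d → ℝ | y p ≤ b} - μ {y : Fin d → ℝ | y p ≤ a} :=
      measure_diff (fun y hy => le_trans hy hab)
        ((measurable_pi_apply p) measurableSet_Iic).nullMeasurableSet (measure_ne_top μ _)
    calc μ (B \ A) ≤ μ ({y : Fin d → ℝ | y p ≤ b} \ {y | y p ≤ a}) := measure_mono hdiff
      _ = μ {y : Fin d → ℝ | y p ≤ b} - μ {y : Fin d → ℝ | y p ≤ a} := h2
      _ ≤ ENNReal.ofReal (b - a) := by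
          rw [marg_val μ hm p b, marg_val μ hm p a, tsub_le_iff_right]
          rcases lt_or_ge a 0 with ha | ha
          · calc ENNReal.ofReal (min b 1) ≤ ENNReal.ofReal (b - a) :=
                  ENNReal.ofReal_le_ofReal (by
                    rcases le_total b 1 with h2 | h2 <;> simp [min_eq_left, min_eq_right, *] <;> linarith)
              _ ≤ _ := le_self_add
          · rw [← ENNReal.ofReal_add (by linarith) (le_min ha zero_le_one)]
            exact ENNReal.ofReal_le_ofReal (by
              rcases le_total a 1 with h1 | h1 <;> rcases le_total b 1 with h2 | h2 <;>
                simp [min_eq_left, min_eq_right, *] <;> linarith)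
  rw [hrep (Function.update u p b), hrep (Function.update u p a), ← hB, ← hA, hmB,
    ENNReal.toReal_add (measure_ne_top μ _) (measure_ne_top μ _)]
  have : (μ (B \ A)).toReal ≤ b - a := by
    rw [← ENNReal.toReal_ofReal (by linarith : (0:ℝ) ≤ b - a)]
    exact ENNReal.toReal_mono (by simp) hmeasle
  linarith

lemma deriv_bound {f : ℝ → ℝ} {x Dv : ℝ} (hx : x ∈ Ioo (0:ℝ) 1)
    (hf : HasDerivWithinAt f Dv (Icc 0 1) x)
    (hmono : ∀ a b : ℝ, a ≤ b → f a ≤ f b)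
    (hlip : ∀ a b : ℝ, a ≤ b → f b - f a ≤ b - a) : Dv ∈ Icc (0:ℝ) 1 := by
  have hsub : Ioo x 1 ⊆ Icc (0:ℝ) 1 \ {x} := fun y hy =>
    ⟨⟨le_of_lt (lt_trans hx.1 hy.1), le_of_lt hy.2⟩, ne_of_gt hy.1⟩
  have hle : 𝓝[Ioo x 1] x ≤ 𝓝[Icc (0:ℝ) 1 \ {x}] x := nhdsWithin_mono x hsub
  haveI := left_nhdsWithin_Ioo_neBot hx.2
  have htend : Tendsto (slope f x) (𝓝[Ioo x 1] x) (𝓝 Dv) :=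
    ((hasDerivWithinAt_iff_tendsto_slope).1 hf).mono_left hle
  have hev : ∀ᶠ y in 𝓝[Ioo x 1] x, slope f x y ∈ Icc (0:ℝ) 1 := by
    filter_upwards [eventually_mem_nhdsWithin] with y hy
    have hxy : 0 < y - x := by linarith [hy.1]
    rw [slope_def_field]
    exact ⟨div_nonneg (sub_nonneg.2 (hmono x y (le_of_lt hy.1))) (le_of_lt hxy),
      (div_le_one hxy).2 (hlip x y (le_of_lt hy.1))⟩
  constructor
  · exact ge_of_tendsto htend (hev.mono fun y hy => hy.1)
  · exact le_of_tendsto htend (hev.mono fun y hy => hy.2)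

lemma inv_est_pos {G β γ : ℝ → ℝ} {τ M η δ q : ℝ}
    (hM : 0 ≤ M) (hη : 0 < η) (hδ0 : 0 < δ) (hγ0 : γ 0 = 0) (hq : q ∈ Ioc (0:ℝ) 1)
    (hG : ∀ x ∈ Icc (0:ℝ) 1, G x = x + τ * β x)
    (hβM : ∀ x ∈ Icc (0:ℝ) 1, |β x| ≤ M)
    (hβγ : ∀ x ∈ Icc (0:ℝ) 1, |β x - γ x| ≤ η)
    (hγmod : ∀ x ∈ Icc (0:ℝ) 1, |x - q| ≤ δ → |γ x - γ q| ≤ η)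
    (hEδ : 2 * (|τ| * M) ≤ δ)
    (hG1 : q ≤ G 1) :
    |sInf {x ∈ Icc (0:ℝ) 1 | q ≤ G x} - q| ≤ |τ| * M ∧
    |sInf {x ∈ Icc (0:ℝ) 1 | q ≤ G x} - q + τ * γ q| ≤ 2 * η * |τ| := by
  set E := |τ| * M with hE
  have hE0 : 0 ≤ E := mul_nonneg (abs_nonneg _) hM
  set S := {x ∈ Icc (0:ℝ) 1 | q ≤ G x} with hS
  have h1S : (1:ℝ) ∈ S := ⟨⟨zero_le_one, le_refl 1⟩, hG1⟩
  have hSne : S.Nonempty := ⟨1, h1S⟩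
  have hbdd : BddBelow S := ⟨0, fun x hx => hx.1.1⟩
  set v := sInf S with hv
  have hτβ : ∀ x ∈ Icc (0:ℝ) 1, |τ * β x| ≤ E := fun x hx => by
    rw [abs_mul]; exact mul_le_mul_of_nonneg_left (hβM x hx) (abs_nonneg _)
  have hlow : q - E ≤ v := by
    apply le_csInf hSne
    intro x hx
    have := hx.2
    rw [hG x hx.1] at this
    have h2 := (abs_le.1 (hτβ x hx.1)).2
    linarith
  have hhigh : v ≤ q + E := by
    rcases le_or_gt (q + E) 1 with h | h
    · apply csInf_le hbdd
      refine ⟨⟨by linarith [hq.1], h⟩, ?_⟩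
      rw [hG _ ⟨by linarith [hq.1], h⟩]
      have := (abs_le.1 (hτβ (q + E) ⟨by linarith [hq.1], h⟩)).1
      linarith
    · exact le_trans (csInf_le hbdd h1S) (le_of_lt h)
  have hcrude : |v - q| ≤ E := abs_le.2 ⟨by linarith, by linarith⟩
  refine ⟨hcrude, ?_⟩
  have hτγ : ∀ x ∈ Icc (0:ℝ) 1, |x - q| ≤ δ → |τ * β x - τ * γ q| ≤ 2 * η * |τ| := by
    intro x hx hxq
    calc |τ * β x - τ * γ q| = |τ| * |β x - γ q| := by rw [← abs_mul, mul_sub]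
      _ ≤ |τ| * (|β x - γ x| + |γ x - γ q|) := by
          apply mul_le_mul_of_nonneg_left _ (abs_nonneg _)
          exact le_trans (abs_sub_le _ _ _) (le_refl _)
      _ ≤ |τ| * (η + η) := by
          apply mul_le_mul_of_nonneg_left _ (abs_nonneg _)
          exact add_le_add (hβγ x hx) (hγmod x hx hxq)
      _ = 2 * η * |τ| := by ring
  have hEδ2 : E ≤ δ / 2 := by linarith
  have hlower : q - τ * γ q - 2 * η * |τ| ≤ v := by
    apply le_of_forall_pos_le_add
    intro θ hθ
    have hθ' : 0 < min θ (δ/2) := lt_min hθ (by linarith)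
    obtain ⟨x, hxS, hxlt⟩ := Real.lt_sInf_add_pos hSne hθ'
    have hxq : |x - q| ≤ δ := by
      have hx1 : x < v + δ/2 := lt_of_lt_of_le hxlt (by linarith [min_le_right θ (δ/2)])
      have hx2 : q - E ≤ x := by
        have := hxS.2; rw [hG x hxS.1] at this
        have h2 := (abs_le.1 (hτβ x hxS.1)).2
        linarith
      rw [abs_le]; constructor <;> [linarith; linarith]
    have hq2 := hxS.2
    rw [hG x hxS.1] at hq2
    have h3 := (abs_le.1 (hτγ x hxS.1 hxq)).2
    have hx3 : x < v + θ := lt_of_lt_of_le hxlt (by linarith [min_le_left θ (δ/2)])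
    linarith
  have hupper : v ≤ q - τ * γ q + 2 * η * |τ| := by
    rcases le_or_gt v 0 with hv0 | hv0
    · have hqE : q ≤ E := by linarith
      have hγq : |γ q| ≤ η := by
        have h0 := hγmod 0 ⟨le_refl 0, zero_le_one⟩ (by
          rw [abs_le]; constructor <;> [linarith [hq.2]; linarith [hq.1]])
        rwa [hγ0, zero_sub, abs_neg] at h0
      have := (abs_le.1 hγq).2
      have h5 : |τ * γ q| ≤ η * |τ| := by
        rw [abs_mul, mul_comm]
        exact mul_le_mul_of_nonneg_right hγq (abs_nonneg _)
      have h6 := (abs_le.1 h5).2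
      have h7 : 0 ≤ η * |τ| := mul_nonneg hη.le (abs_nonneg τ)
      linarith [hq.1.le]
    · apply le_of_forall_pos_le_add
      intro θ hθ
      obtain ⟨m, hm0, hmθ, hmv, hmδ⟩ : ∃ m : ℝ, 0 < m ∧ m ≤ θ ∧ m ≤ v ∧ m ≤ δ/2 :=
        ⟨min θ (min v (δ/2)), lt_min hθ (lt_min hv0 (by linarith)), min_le_left _ _,
          le_trans (min_le_right _ _) (min_le_left _ _),
          le_trans (min_le_right _ _) (min_le_right _ _)⟩
      have hxIcc : v - m ∈ Icc (0:ℝ) 1 := ⟨by linarith, by linarith [csInf_le hbdd h1S]⟩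
      have hxnS : v - m ∉ S := notMem_of_lt_csInf (by linarith) hbdd
      have hGx : G (v - m) < q := by
        by_contra h
        exact hxnS ⟨hxIcc, le_of_not_gt h⟩
      rw [hG _ hxIcc] at hGx
      have hxq : |v - m - q| ≤ δ := by
        rw [abs_le]; constructor <;> [linarith; linarith]
      have h3 := (abs_le.1 (hτγ _ hxIcc hxq)).1
      linarith
  exact abs_le.2 ⟨by linarith, by linarith⟩

lemma inv_est_zero {G β γ : ℝ → ℝ} {τ M η δ : ℝ}
    (hM : 0 ≤ M) (hη : 0 < η) (hγ0 : γ 0 = 0)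
    (hG : ∀ x ∈ Icc (0:ℝ) 1, G x = x + τ * β x)
    (hβM : ∀ x ∈ Icc (0:ℝ) 1, |β x| ≤ M)
    (hβγ : ∀ x ∈ Icc (0:ℝ) 1, |β x - γ x| ≤ η)
    (hγmod : ∀ x ∈ Icc (0:ℝ) 1, |x - 0| ≤ δ → |γ x - γ 0| ≤ η)
    (hEδ : 2 * (|τ| * M) ≤ δ)
    (hG0 : G 0 = 0) :
    sSup {x ∈ Icc (0:ℝ) 1 | G x = 0} ∈ Icc (0:ℝ) (|τ| * M) ∧
    sSup {x ∈ Icc (0:ℝ) 1 | G x = 0} ≤ 2 * η * |τ| := by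
  set S := {x ∈ Icc (0:ℝ) 1 | G x = 0} with hS
  have h0S : (0:ℝ) ∈ S := ⟨⟨le_refl 0, zero_le_one⟩, hG0⟩
  have hSne : S.Nonempty := ⟨0, h0S⟩
  have hbddS : BddAbove S := ⟨1, fun x hx => hx.1.2⟩
  have key : ∀ x ∈ S, x ≤ |τ| * M ∧ x ≤ 2 * η * |τ| := by
    intro x hxS
    have hGx : x + τ * β x = 0 := by rw [← hG x hxS.1]; exact hxS.2
    have hb : |τ * β x| ≤ |τ| * M := by
      rw [abs_mul]; exact mul_le_mul_of_nonneg_left (hβM x hxS.1) (abs_nonneg _)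
    have h1 : x ≤ |τ| * M := by
      have := (abs_le.1 hb).1; linarith
    refine ⟨h1, ?_⟩
    have hxδ : |x - 0| ≤ δ := by
      rw [sub_zero, abs_of_nonneg hxS.1.1]; linarith [mul_nonneg (abs_nonneg τ) hM]
    have hγx : |γ x| ≤ η := by
      have := hγmod x hxS.1 hxδ; rwa [hγ0, sub_zero] at this
    have hβx : |β x| ≤ 2 * η := by
      calc |β x| ≤ |β x - γ x| + |γ x| := by
            have := abs_sub_abs_le_abs_sub (β x) (γ x); linarith [abs_sub_le (β x) (γ x) 0,
              abs_nonneg (γ x)]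
        _ ≤ η + η := add_le_add (hβγ x hxS.1) hγx
        _ = 2 * η := by ring
    have hb2 : |τ * β x| ≤ |τ| * (2 * η) := by
      rw [abs_mul]; exact mul_le_mul_of_nonneg_left hβx (abs_nonneg _)
    have := (abs_le.1 hb2).1
    have heq : (2:ℝ) * η * |τ| = |τ| * (2 * η) := by ring
    rw [heq]; linarith
  exact ⟨⟨le_csSup hbddS h0S, csSup_le hSne (fun x hx => (key x hx).1)⟩,
    csSup_le hSne (fun x hx => (key x hx).2)⟩


set_option maxHeartbeats 1000000 in
/-- Hadamard differentiability of `Γ(H^#)(s,u) = H^#(s,H⁻(u))` at `C^#`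
tangentially to `D₀^#`: under Segers' condition on the copula `C`, for `tₙ → 0`
(`tₙ ≠ 0`) and bounded `αₙ^# → α^# ∈ D₀^#` uniformly with `C^# + tₙαₙ^#` in the domain,
`(Γ(C^# + tₙαₙ^#) − Γ(C^#))/tₙ` converges uniformly to
`(s,u) ↦ α^#(s,u) − s·Σ_p ∂_pC(u)·α^#(1,u^{(p)})`. -/
theorem Gamma_hadamard_differentiable_at_Csharp
    (d : ℕ) (C : (Fin d → ℝ) → ℝ) (hC : IsCopula d C)
    (D : Fin d → (Fin d → ℝ) → ℝ)
    (hDderiv : ∀ p : Fin d, ∀ u ∈ cube d, u p ∈ Ioo (0:ℝ) 1 →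
      HasDerivWithinAt (fun s => C (Function.update u p s)) (D p u) (Icc (0:ℝ) 1) (u p))
    (hDcont : ∀ p : Fin d, ContinuousOn (D p) {u | u ∈ cube d ∧ u p ∈ Ioo (0:ℝ) 1})
    (hDbdry : ∀ p : Fin d, ∀ u, (u p = 0 ∨ u p = 1) → D p u = 0)
    (t : ℕ → ℝ) (ht0 : ∀ n, t n ≠ 0) (htt : Tendsto t atTop (nhds 0))
    (α : ℝ → (Fin d → ℝ) → ℝ) (αn : ℕ → ℝ → (Fin d → ℝ) → ℝ)
    (hbdd : ∀ n, ∃ M, ∀ s ∈ Icc (0:ℝ) 1, ∀ u ∈ cube d, |αn n s u| ≤ M)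
    (hunif : TendstoUniformlyOn (fun n q => αn n q.1 q.2) (fun q => α q.1 q.2) atTop
      (Icc (0:ℝ) 1 ×ˢ cube d))
    -- `α^# ∈ D₀^#`:
    (hαcont : ContinuousOn (fun q : ℝ × (Fin d → ℝ) => α q.1 q.2) (Icc (0:ℝ) 1 ×ˢ cube d))
    (hα0 : ∀ u, α 0 u = 0)
    (hαD0 : ∀ s ∈ Ioc (0:ℝ) 1, α s (fun _ => 1) = 0 ∧ ∀ u, (∃ p, u p = 0) → α s u = 0)
    -- `H = C + tₙαₙ^#(1,·)` is a distribution function on `[0,1]^d` with marginals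
    -- vanishing at `0`:
    (hdom : ∀ n, ∃ ν : Measure (Fin d → ℝ), IsProbabilityMeasure ν ∧
      (∀ p : Fin d, ν {x | x p ≤ 0} = 0 ∧ ν {x | 1 < x p} = 0) ∧
      (∀ u ∈ cube d, C u + t n * αn n 1 u = (ν {x | ∀ p, x p ≤ u p}).toReal))
    -- generalized inverses of the marginals of `H`:
    (Finv : ℕ → Fin d → ℝ → ℝ)
    (hFinv : ∀ n (p : Fin d), ∀ q ∈ Ioc (0:ℝ) 1,
      Finv n p q = sInf {x ∈ Icc (0:ℝ) 1 |
        q ≤ C (margVec p x) + t n * αn n 1 (margVec p x)})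
    (hFinv0 : ∀ n (p : Fin d), Finv n p 0 = sSup {x ∈ Icc (0:ℝ) 1 |
        C (margVec p x) + t n * αn n 1 (margVec p x) = 0}) :
    Tendsto (fun n => ⨆ q : (Icc (0:ℝ) 1 ×ˢ cube d : Set (ℝ × (Fin d → ℝ))),
      |((q.1.1 * C (fun p => Finv n p (q.1.2 p))
            + t n * αn n q.1.1 (fun p => Finv n p (q.1.2 p))
          - q.1.1 * C q.1.2) / t n)
        - (α q.1.1 q.1.2 - q.1.1 * ∑ p, D p q.1.2 * α 1 (margVec p (q.1.2 p)))|)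
      atTop (nhds 0) := by
  obtain ⟨μ, hμprob, hμm, hμrep⟩ := hC
  haveI := hμprob
  -- basic membership facts
  have honemem : (fun _ : Fin d => (1:ℝ)) ∈ cube d := fun i _ => ⟨zero_le_one, le_refl 1⟩
  have hmargmem : ∀ (p : Fin d) (x : ℝ), x ∈ Icc (0:ℝ) 1 → margVec p x ∈ cube d := by
    intro p x hx i _
    rcases eq_or_ne i p with rfl | h
    · simpa [margVec] using hx
    · simp only [margVec, Function.update_of_ne h]
      exact ⟨zero_le_one, le_refl 1⟩
  have hmarg1 : ∀ p : Fin d, margVec p 1 = (fun _ => (1:ℝ)) := by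
    intro p; funext j
    rcases eq_or_ne j p with rfl | h
    · simp [margVec]
    · simp [margVec, Function.update_of_ne h]
  have hα11 : α 1 (fun _ => 1) = 0 := (hαD0 1 ⟨one_pos, le_refl 1⟩).1
  have hα1z : ∀ p : Fin d, α 1 (margVec p 0) = 0 := fun p =>
    (hαD0 1 ⟨one_pos, le_refl 1⟩).2 _ ⟨p, by simp [margVec]⟩
  set dom := Icc (0:ℝ) 1 ×ˢ cube d with hdomdef
  have hdommem : ∀ (s : ℝ) (u : Fin d → ℝ), s ∈ Icc (0:ℝ) 1 → u ∈ cube d →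
      (s, u) ∈ dom := fun s u hs hu => ⟨hs, hu⟩
  have hdomc : IsCompact dom :=
    (isCompact_Icc).prod (isCompact_univ_pi fun _ => isCompact_Icc)
  -- bound on α
  obtain ⟨Mα0, hMα0⟩ : ∃ M, ∀ q ∈ dom, ‖α q.1 q.2‖ ≤ M :=
    hdomc.exists_bound_of_continuousOn hαcont
  set Mα := max Mα0 1 with hMαdef
  have hMα1 : (1:ℝ) ≤ Mα := le_max_right _ _
  have hMα0' : 0 < Mα := lt_of_lt_of_le one_pos hMα1
  have hMα : ∀ s ∈ Icc (0:ℝ) 1, ∀ u ∈ cube d, |α s u| ≤ Mα := fun s hs u hu =>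
    le_trans (hMα0 (s, u) ⟨hs, hu⟩) (le_max_left _ _)
  -- uniform continuity modulus of α
  have hmod : ∀ η : ℝ, 0 < η → ∃ δ : ℝ, 0 < δ ∧ ∀ q ∈ dom, ∀ q' ∈ dom,
      dist q q' ≤ δ → |α q.1 q.2 - α q'.1 q'.2| ≤ η := by
    intro η hη
    have huc := hdomc.uniformContinuousOn_of_continuous hαcont
    rw [Metric.uniformContinuousOn_iff] at huc
    obtain ⟨δ, hδ, h⟩ := huc η hη
    refine ⟨δ/2, by linarith, fun q hq q' hq' hd => le_of_lt ?_⟩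
    rw [← Real.dist_eq]
    exact h q hq q' hq' (lt_of_le_of_lt hd (by linarith))
  -- distance of margVec points
  have hdistm : ∀ (p : Fin d) (s x y : ℝ),
      dist ((s, margVec p x) : ℝ × (Fin d → ℝ)) ((s, margVec p y)) ≤ |x - y| := by
    intro p s x y
    rw [Prod.dist_eq]
    apply max_le (by simp [abs_nonneg])
    apply dist_pi_le_iff (abs_nonneg _) |>.2
    intro j
    rcases eq_or_ne j p with rfl | h
    · simp [margVec, Real.dist_eq]
    · simp [margVec, Function.update_of_ne h, dist_self, abs_nonneg]
  -- copula facts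
  have hCmarg : ∀ (p : Fin d) (x : ℝ), x ∈ Icc (0:ℝ) 1 → C (margVec p x) = x :=
    fun p x hx => cop_margin μ hμm hμrep p hx
  have hClB : ∀ (u : Fin d → ℝ) (p : Fin d) (a b : ℝ), a ≤ b →
      C (Function.update u p a) ≤ C (Function.update u p b) ∧
      C (Function.update u p b) - C (Function.update u p a) ≤ b - a := by
    intro u p a b hab
    constructor
    · apply cop_mono μ hμrep
      intro j
      rcases eq_or_ne j p with rfl | h
      · simpa using hab
      · simp [Function.update_of_ne h]
    · exact cop_lip μ hμm hμrep u p hab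
  have hClip : ∀ (u : Fin d → ℝ) (p : Fin d) (a b : ℝ),
      |C (Function.update u p a) - C (Function.update u p b)| ≤ |a - b| := by
    intro u p a b
    rcases le_total a b with h | h
    · rw [abs_sub_comm, abs_of_nonneg (by linarith [(hClB u p a b h).1]),
        abs_sub_comm, abs_of_nonneg (by linarith)]
      exact (hClB u p a b h).2
    · rw [abs_of_nonneg (by linarith [(hClB u p b a h).1]),
        abs_of_nonneg (by linarith)]
      exact (hClB u p b a h).2
  -- D bounds
  have hD01 : ∀ (p : Fin d) (u : Fin d → ℝ), u ∈ cube d → D p u ∈ Icc (0:ℝ) 1 := by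
    intro p u hu
    have hup := hu p (mem_univ p)
    rcases eq_or_lt_of_le hup.1 with h0 | h0
    · rw [hDbdry p u (Or.inl h0.symm)]; exact ⟨le_refl 0, zero_le_one⟩
    rcases eq_or_lt_of_le hup.2 with h1 | h1
    · rw [hDbdry p u (Or.inr h1)]; exact ⟨le_refl 0, zero_le_one⟩
    apply deriv_bound ⟨h0, h1⟩ (hDderiv p u hu ⟨h0, h1⟩)
    · exact fun a b hab => (hClB u p a b hab).1
    · exact fun a b hab => (hClB u p a b hab).2
  -- per-n measure facts
  choose ν hνprob hνmarg hνrep using hdom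
  have hGrep : ∀ (n : ℕ) (p : Fin d) (x : ℝ), x ∈ Icc (0:ℝ) 1 →
      C (margVec p x) + t n * αn n 1 (margVec p x) = (ν n {y | y p ≤ x}).toReal := by
    intro n p x hx
    rw [hνrep n _ (hmargmem p x hx), meas_margVec (ν n) (fun j => (hνmarg n j).2) p x]
  have hG0 : ∀ (n : ℕ) (p : Fin d),
      C (margVec p 0) + t n * αn n 1 (margVec p 0) = 0 := by
    intro n p
    rw [hGrep n p 0 ⟨le_refl 0, zero_le_one⟩]
    have h0 : ν n {y | y p ≤ 0} = 0 := (hνmarg n p).1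
    rw [h0, ENNReal.toReal_zero]
  have hG1 : ∀ (n : ℕ) (p : Fin d),
      C (margVec p 1) + t n * αn n 1 (margVec p 1) = 1 := by
    intro n p
    rw [hGrep n p 1 ⟨zero_le_one, le_refl 1⟩]
    haveI := hνprob n
    have hcpl : {y : Fin d → ℝ | y p ≤ 1} = {y : Fin d → ℝ | 1 < y p}ᶜ := by
      ext y; simp [not_lt]
    have hms : MeasurableSet {y : Fin d → ℝ | 1 < y p} :=
      measurableSet_lt measurable_const (measurable_pi_apply p)
    rw [hcpl, measure_compl hms (measure_ne_top _ _),
      (hνmarg n p).2, measure_univ, tsub_zero, ENNReal.toReal_one]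
  -- Finv membership
  have hFmem : ∀ (n : ℕ) (p : Fin d) (q : ℝ), q ∈ Icc (0:ℝ) 1 →
      Finv n p q ∈ Icc (0:ℝ) 1 := by
    intro n p q hq
    rcases eq_or_lt_of_le hq.1 with h0 | h0
    · rw [← h0, hFinv0 n p]
      have h0S : (0:ℝ) ∈ {x ∈ Icc (0:ℝ) 1 |
          C (margVec p x) + t n * αn n 1 (margVec p x) = 0} :=
        ⟨⟨le_refl 0, zero_le_one⟩, hG0 n p⟩
      have hbdd' : BddAbove {x ∈ Icc (0:ℝ) 1 |
          C (margVec p x) + t n * αn n 1 (margVec p x) = 0} := ⟨1, fun x hx => hx.1.2⟩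
      exact ⟨le_csSup hbdd' h0S, csSup_le ⟨0, h0S⟩ fun x hx => hx.1.2⟩
    · rw [hFinv n p q ⟨h0, hq.2⟩]
      have h1S : (1:ℝ) ∈ {x ∈ Icc (0:ℝ) 1 |
          q ≤ C (margVec p x) + t n * αn n 1 (margVec p x)} :=
        ⟨⟨zero_le_one, le_refl 1⟩, by rw [hG1 n p]; exact hq.2⟩
      exact ⟨le_csInf ⟨1, h1S⟩ fun x hx => hx.1.1,
        csInf_le ⟨0, fun x hx => hx.1.1⟩ h1S⟩
  -- main estimate
  rw [Metric.tendsto_atTop]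
  intro ε hε
  set ε' := ε / (4 * ((d:ℝ) + 1)) with hε'def
  have hdpos : (0:ℝ) < (d:ℝ) + 1 := by positivity
  have hε' : 0 < ε' := by positivity
  set η := min (ε' / 4) 1 with hηdef
  have hη : 0 < η := lt_min (by positivity) one_pos
  have hηe : η ≤ ε' / 4 := min_le_left _ _
  have hη1 : η ≤ 1 := min_le_right _ _
  obtain ⟨δc, hδc, hmodc⟩ := hmod (ε' / 4) (by positivity)
  set δb := min δc (1/4) with hδbdef
  have hδb : 0 < δb := lt_min hδc (by norm_num)
  have hδb4 : δb ≤ 1/4 := min_le_right _ _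
  obtain ⟨δη, hδη, hmodη⟩ := hmod η hη
  set ε₂ := ε' / (2 * Mα) with hε₂def
  have hε₂ : 0 < ε₂ := by positivity
  set K : Fin d → Set (Fin d → ℝ) :=
    fun p => {x | x ∈ cube d ∧ x p ∈ Icc (δb/2) (1 - δb/2)} with hKdef
  have hKmods : ∀ p : Fin d, ∃ δD : ℝ, 0 < δD ∧ ∀ x ∈ K p, ∀ y ∈ K p,
      dist x y ≤ δD → |D p x - D p y| ≤ ε₂ := by
    intro p
    have hKsub : K p ⊆ {u | u ∈ cube d ∧ u p ∈ Ioo (0:ℝ) 1} := by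
      intro x hx
      exact ⟨hx.1, ⟨lt_of_lt_of_le (by linarith) hx.2.1, lt_of_le_of_lt hx.2.2 (by linarith)⟩⟩
    have hKcl : IsClosed (K p) := by
      have : K p = (Set.univ.pi fun _ : Fin d => Icc (0:ℝ) 1) ∩
          ((fun x : Fin d → ℝ => x p) ⁻¹' Icc (δb/2) (1 - δb/2)) := rfl
      rw [this]
      exact (isClosed_set_pi fun i _ => isClosed_Icc).inter
        (IsClosed.preimage (continuous_apply p) isClosed_Icc)
    have hKc : IsCompact (K p) :=
      (isCompact_univ_pi fun _ : Fin d => isCompact_Icc).of_isClosed_subset hKcl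
        (fun x hx => hx.1)
    have huc := hKc.uniformContinuousOn_of_continuous ((hDcont p).mono hKsub)
    rw [Metric.uniformContinuousOn_iff] at huc
    obtain ⟨δ, hδ, h⟩ := huc ε₂ hε₂
    refine ⟨δ/2, by linarith, fun x hx y hy hd => le_of_lt ?_⟩
    rw [← Real.dist_eq]
    exact h x hx y hy (lt_of_le_of_lt hd (by linarith))
  choose δD hδD hKmod using hKmods
  -- eventual conditions
  have hcond1 : ∀ᶠ n in atTop, ∀ q ∈ dom, |α q.1 q.2 - αn n q.1 q.2| ≤ η := by
    filter_upwards [Metric.tendstoUniformlyOn_iff.1 hunif η hη] with n h q hq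
    exact le_of_lt (by rw [← Real.dist_eq]; exact h q hq)
  have httabs : ∀ r : ℝ, 0 < r → ∀ᶠ n in atTop, |t n| < r := by
    intro r hr
    filter_upwards [Metric.tendsto_nhds.1 htt r hr] with n h
    rwa [Real.dist_eq, sub_zero] at h
  have hMp : (0:ℝ) < Mα + 1 := by linarith
  have hcond2a := httabs (δη / (2 * (Mα + 1))) (by positivity)
  have hcond2b := httabs (δb / (2 * (Mα + 1))) (by positivity)
  have hcond2c : ∀ᶠ n in atTop, ∀ p : Fin d, |t n| * (Mα + 1) ≤ δD p := by
    rw [eventually_all]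
    intro p
    filter_upwards [httabs (δD p / (Mα + 1)) (div_pos (hδD p) hMp)] with n h
    have h2 := mul_lt_mul_of_pos_right h hMp
    rw [div_mul_cancel₀ _ (ne_of_gt hMp)] at h2
    exact h2.le
  obtain ⟨N, hN⟩ := (hcond1.and (hcond2a.and (hcond2b.and hcond2c))).exists_forall_of_atTop
  refine ⟨N, fun n hn => ?_⟩
  obtain ⟨h1, h2a, h2b, h2c⟩ := hN n hn
  have htpos : 0 < |t n| := abs_pos.2 (ht0 n)
  have hE2a : 2 * (|t n| * (Mα + 1)) ≤ δη := by
    rw [lt_div_iff₀ (by positivity)] at h2a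
    nlinarith
  have hE2b : 2 * (|t n| * (Mα + 1)) ≤ δb := by
    rw [lt_div_iff₀ (by positivity)] at h2b
    nlinarith
  -- inverse estimates
  have hI : ∀ (p : Fin d) (q : ℝ), q ∈ Icc (0:ℝ) 1 →
      |Finv n p q - q| ≤ |t n| * (Mα + 1) ∧
      |Finv n p q - q + t n * α 1 (margVec p q)| ≤ 2 * η * |t n| := by
    intro p q hq
    have hγ0 : α 1 (margVec p 0) = 0 := hα1z p
    have hβM : ∀ x ∈ Icc (0:ℝ) 1, |αn n 1 (margVec p x)| ≤ Mα + 1 := by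
      intro x hx
      have hm := hmargmem p x hx
      have h1' := h1 (1, margVec p x) (hdommem 1 _ ⟨zero_le_one, le_refl 1⟩ hm)
      have h2' := hMα 1 ⟨zero_le_one, le_refl 1⟩ _ hm
      calc |αn n 1 (margVec p x)| ≤ |α 1 (margVec p x)| + |α 1 (margVec p x) - αn n 1 (margVec p x)| := by
            have := abs_sub_abs_le_abs_sub (αn n 1 (margVec p x)) (α 1 (margVec p x))
            rw [abs_sub_comm] at this
            linarith [abs_nonneg (α 1 (margVec p x) - αn n 1 (margVec p x))]
        _ ≤ Mα + 1 := add_le_add h2' (le_trans h1' hη1)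
    have hβγ : ∀ x ∈ Icc (0:ℝ) 1, |αn n 1 (margVec p x) - α 1 (margVec p x)| ≤ η := by
      intro x hx
      rw [abs_sub_comm]
      exact h1 (1, margVec p x) (hdommem 1 _ ⟨zero_le_one, le_refl 1⟩ (hmargmem p x hx))
    have hγmod : ∀ x ∈ Icc (0:ℝ) 1, |x - q| ≤ δη →
        |α 1 (margVec p x) - α 1 (margVec p q)| ≤ η := by
      intro x hx hxq
      exact hmodη (1, margVec p x) (hdommem 1 _ ⟨zero_le_one, le_refl 1⟩ (hmargmem p x hx))
        (1, margVec p q) (hdommem 1 _ ⟨zero_le_one, le_refl 1⟩ (hmargmem p q hq))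
        (le_trans (hdistm p 1 x q) hxq)
    have hGform : ∀ x ∈ Icc (0:ℝ) 1,
        C (margVec p x) + t n * αn n 1 (margVec p x) = x + t n * αn n 1 (margVec p x) := by
      intro x hx; rw [hCmarg p x hx]
    rcases eq_or_lt_of_le hq.1 with h0 | h0
    · -- q = 0
      subst h0
      rw [hFinv0 n p]
      have hz := inv_est_zero (M := Mα + 1) (τ := t n)
        (γ := fun x => α 1 (margVec p x)) (by positivity) hη hγ0 hGform hβM hβγ
        (fun x hx hxd => hγmod x hx hxd) hE2a (hG0 n p)
      rw [hγ0]
      constructor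
      · rw [sub_zero, abs_of_nonneg hz.1.1]
        exact hz.1.2
      · rw [mul_zero, add_zero, sub_zero, abs_of_nonneg hz.1.1]
        exact hz.2
    · -- q ∈ Ioc 0 1
      rw [hFinv n p q ⟨h0, hq.2⟩]
      have hpos := inv_est_pos (M := Mα + 1) (τ := t n)
        (γ := fun x => α 1 (margVec p x)) (by positivity) hη hδη hγ0 ⟨h0, hq.2⟩
        hGform hβM hβγ hγmod hE2a (by rw [hG1 n p]; exact hq.2)
      exact hpos
  have hEn : 0 ≤ |t n| * (Mα + 1) := by positivity
  have hmain : ∀ (s : ℝ) (u : Fin d → ℝ), s ∈ Icc (0:ℝ) 1 → u ∈ cube d →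
      |((s * C (fun p => Finv n p (u p)) + t n * αn n s (fun p => Finv n p (u p))
            - s * C u) / t n)
        - (α s u - s * ∑ p, D p u * α 1 (margVec p (u p)))| ≤ (d:ℝ) * ε' + 2 * η := by
    intro s u hs hu
    set v : Fin d → ℝ := fun p => Finv n p (u p) with hvdef
    have hup : ∀ p : Fin d, u p ∈ Icc (0:ℝ) 1 := fun p => hu p (mem_univ p)
    have hvmem : v ∈ cube d := fun p _ => hFmem n p (u p) (hup p)
    -- T2
    have hT2 : |αn n s v - α s u| ≤ 2 * η := by
      have h1' := h1 (s, v) (hdommem s v hs hvmem)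
      have hdistvu : dist ((s, v) : ℝ × (Fin d → ℝ)) ((s, u)) ≤ δη := by
        rw [Prod.dist_eq]
        apply max_le (by simpa using hδη.le)
        apply (dist_pi_le_iff hδη.le).2
        intro p
        rw [Real.dist_eq]
        exact le_trans (hI p (u p) (hup p)).1 (by linarith)
      have h2' := hmodη (s, v) (hdommem s v hs hvmem) (s, u) (hdommem s u hs hu) hdistvu
      calc |αn n s v - α s u| ≤ |αn n s v - α s v| + |α s v - α s u| := abs_sub_le _ _ _
        _ ≤ η + η := add_le_add (by rw [abs_sub_comm]; exact h1') h2'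
        _ = 2 * η := by ring
    -- telescoping vectors
    set w : ℕ → (Fin d → ℝ) := fun m => fun i => if (i : ℕ) < m then v i else u i with hwdef
    have hw0 : w 0 = u := funext fun i => by simp [hwdef]
    have hwd : w d = v := funext fun i => by simp [hwdef, i.isLt]
    have hwmem : ∀ m, w m ∈ cube d := by
      intro m i _
      by_cases h : (i : ℕ) < m
      · simpa [hwdef, h] using hvmem i (mem_univ i)
      · simpa [hwdef, h] using hup i
    have hwk : ∀ k : Fin d, w k k = u k := fun k => by simp [hwdef]
    have hwsucc : ∀ k : Fin d, w ((k : ℕ) + 1) = Function.update (w k) k (v k) := by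
      intro k
      funext i
      rcases eq_or_ne i k with rfl | h
      · simp [hwdef, Function.update_self, Nat.lt_succ_self]
      · have hik : (i : ℕ) ≠ (k : ℕ) := fun hh => h (Fin.ext hh)
        rw [Function.update_of_ne h]
        have : ((i : ℕ) < (k : ℕ) + 1) ↔ ((i : ℕ) < (k : ℕ)) := by omega
        simp [hwdef, this]
    have hwnear : ∀ (k : Fin d) (i : Fin d), |w k i - u i| ≤ |t n| * (Mα + 1) := by
      intro k i
      by_cases h : (i : ℕ) < (k : ℕ)
      · simpa [hwdef, h] using (hI i (u i) (hup i)).1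
      · simp [hwdef, h, hEn]
    -- per-coordinate estimate
    have hperk : ∀ k : Fin d,
        |C (w ((k : ℕ) + 1)) - C (w (k : ℕ)) + t n * (D k u * α 1 (margVec k (u k)))|
          ≤ |t n| * ε' := by
      intro k
      have hukm := hup k
      set a := α 1 (margVec k (u k)) with hadef
      set b := u k - t n * a with hbdef
      have haM : |a| ≤ Mα := hMα 1 ⟨zero_le_one, le_refl 1⟩ _ (hmargmem k (u k) hukm)
      have htaM : |t n * a| ≤ |t n| * Mα := by
        rw [abs_mul]; exact mul_le_mul_of_nonneg_left haM (abs_nonneg _)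
      have hCsucc : C (w ((k : ℕ) + 1)) = C (Function.update (w k) k (v k)) := by
        rw [hwsucc k]
      have hCk : C (w (k : ℕ)) = C (Function.update (w k) k (u k)) := by
        conv_lhs => rw [← Function.update_eq_self k (w (k : ℕ))]
        rw [hwk k]
      have hstep1 : |C (Function.update (w k) k (v k)) - C (Function.update (w k) k b)|
          ≤ 2 * η * |t n| := by
        apply le_trans (hClip (w k) k (v k) b)
        have he : v k - b = Finv n k (u k) - u k + t n * a := by
          rw [hbdef]; simp only [hvdef]; ring
        rw [he, hadef]
        exact (hI k (u k) hukm).2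
      have hD01k := hD01 k u hu
      have hDabs : |D k u| ≤ 1 := by rw [abs_of_nonneg hD01k.1]; exact hD01k.2
      have hbdy : |a| ≤ ε' / 4 →
          |C (Function.update (w k) k b) - C (Function.update (w k) k (u k))
            + t n * (D k u * a)| ≤ |t n| * (ε' / 2) := by
        intro hadist
        have h1b := hClip (w k) k b (u k)
        have h2b : |b - u k| ≤ |t n| * (ε' / 4) := by
          rw [hbdef, show u k - t n * a - u k = -(t n * a) from by ring, abs_neg, abs_mul]
          exact mul_le_mul_of_nonneg_left hadist (abs_nonneg _)
        have h3b : |t n * (D k u * a)| ≤ |t n| * (ε' / 4) := by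
          rw [abs_mul]
          apply mul_le_mul_of_nonneg_left _ (abs_nonneg _)
          rw [abs_mul]
          calc |D k u| * |a| ≤ 1 * (ε' / 4) :=
                mul_le_mul hDabs hadist (abs_nonneg _) zero_le_one
            _ = ε' / 4 := one_mul _
        calc |C (Function.update (w k) k b) - C (Function.update (w k) k (u k))
              + t n * (D k u * a)|
            ≤ |C (Function.update (w k) k b) - C (Function.update (w k) k (u k))|
              + |t n * (D k u * a)| := abs_add_le _ _
          _ ≤ |t n| * (ε' / 4) + |t n| * (ε' / 4) := add_le_add (le_trans h1b h2b) h3b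
          _ = |t n| * (ε' / 2) := by ring
      have hmain2 : |C (Function.update (w k) k b) - C (Function.update (w k) k (u k))
          + t n * (D k u * a)| ≤ |t n| * (ε' / 2) := by
        rcases le_or_gt (u k) δb with hcase | hcase
        · apply hbdy
          have hh := hmodc (1, margVec k (u k))
            (hdommem 1 _ ⟨zero_le_one, le_refl 1⟩ (hmargmem k (u k) hukm))
            (1, margVec k 0)
            (hdommem 1 _ ⟨zero_le_one, le_refl 1⟩ (hmargmem k 0 ⟨le_refl 0, zero_le_one⟩))
            (le_trans (hdistm k 1 (u k) 0) (by
              rw [sub_zero, abs_of_nonneg hukm.1]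
              exact le_trans hcase (min_le_left _ _)))
          rw [hα1z k, sub_zero] at hh
          rwa [hadef]
        rcases le_or_gt (1 - δb) (u k) with hcase1 | hcase1
        · apply hbdy
          have hh := hmodc (1, margVec k (u k))
            (hdommem 1 _ ⟨zero_le_one, le_refl 1⟩ (hmargmem k (u k) hukm))
            (1, margVec k 1)
            (hdommem 1 _ ⟨zero_le_one, le_refl 1⟩ (hmargmem k 1 ⟨zero_le_one, le_refl 1⟩))
            (le_trans (hdistm k 1 (u k) 1) (by
              rw [abs_sub_comm, abs_of_nonneg (by linarith [hukm.2] : (0:ℝ) ≤ 1 - u k)]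
              have : 1 - u k ≤ δb := by linarith
              exact le_trans this (min_le_left _ _)))
          rw [hmarg1 k, hα11, sub_zero] at hh
          rwa [hadef]
        · -- interior case
          have hEδb : |t n| * (Mα + 1) ≤ δb / 2 := by linarith
          have htaM2 : |t n * a| ≤ δb / 2 := by
            apply le_trans htaM (le_trans _ hEδb)
            nlinarith [abs_nonneg (t n)]
          have htaMle := abs_le.1 htaM2
          have hbmem : b ∈ Icc (δb/2) (1 - δb/2) := by
            rw [hbdef]
            constructor
            · linarith [htaMle.2]
            · linarith [htaMle.1]
          have hseg : Icc (min b (u k)) (max b (u k)) ⊆ Icc (δb/2) (1 - δb/2) := by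
            intro x hx
            constructor
            · exact le_trans (le_min hbmem.1 (by linarith)) hx.1
            · exact le_trans hx.2 (max_le hbmem.2 (by linarith))
          have hseg01 : Icc (min b (u k)) (max b (u k)) ⊆ Icc (0:ℝ) 1 := by
            intro x hx
            have h1x := (hseg hx).1
            have h2x := (hseg hx).2
            exact ⟨by linarith, by linarith⟩
          have humem : u ∈ K k := ⟨hu, ⟨by linarith, by linarith⟩⟩
          have hupdmem : ∀ x ∈ Icc (min b (u k)) (max b (u k)),
              Function.update (w k) k x ∈ K k := by
            intro x hx
            refine ⟨?_, ?_⟩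
            · intro i _
              rcases eq_or_ne i k with rfl | hik
              · rw [Function.update_self]; exact hseg01 hx
              · rw [Function.update_of_ne hik]; exact hwmem (k : ℕ) i (mem_univ i)
            · rw [Function.update_self]; exact hseg hx
          have hbuk : |b - u k| ≤ |t n| * Mα := by
            rw [hbdef, show u k - t n * a - u k = -(t n * a) from by ring, abs_neg]
            exact htaM
          have hdistK : ∀ x ∈ Icc (min b (u k)) (max b (u k)),
              dist (Function.update (w k) k x) u ≤ δD k := by
            intro x hx
            apply (dist_pi_le_iff (hδD k).le).2
            intro i
            rcases eq_or_ne i k with rfl | hik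
            · rw [Function.update_self, Real.dist_eq]
              have hml : max b (u i) - min b (u i) = |b - u i| := (max_sub_min_eq_abs b (u i)).trans (abs_sub_comm (u i) b)
              have hxa : |x - u i| ≤ |b - u i| := by
                rw [abs_le]
                constructor
                · linarith [hx.1, le_max_right b (u i)]
                · linarith [hx.2, min_le_right b (u i)]
              apply le_trans hxa (le_trans hbuk (le_trans _ (h2c i)))
              nlinarith [abs_nonneg (t n)]
            · rw [Function.update_of_ne hik, Real.dist_eq]
              exact le_trans (hwnear k i) (h2c k)
          have hderiv : ∀ x ∈ Icc (min b (u k)) (max b (u k)),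
              HasDerivWithinAt (fun y => C (Function.update (w k) k y) - y * D k u)
                (D k (Function.update (w k) k x) - D k u)
                (Icc (min b (u k)) (max b (u k))) x := by
            intro x hx
            have hxm : Function.update (w k) k x ∈ cube d := (hupdmem x hx).1
            have hxI : x ∈ Ioo (0:ℝ) 1 :=
              ⟨lt_of_lt_of_le (by linarith) (hseg hx).1,
                lt_of_le_of_lt (hseg hx).2 (by linarith)⟩
            have hd := hDderiv k (Function.update (w k) k x) hxm
              (by rw [Function.update_self]; exact hxI)
            simp only [Function.update_idem, Function.update_self] at hd
            have hid' : HasDerivWithinAt (fun y : ℝ => y * D k u) (D k u)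
                (Icc (min b (u k)) (max b (u k))) x := by
              simpa using (hasDerivWithinAt_id x
                (Icc (min b (u k)) (max b (u k)))).mul_const (D k u)
            exact (hd.mono hseg01).sub hid'
          have hgb : ∀ x ∈ Icc (min b (u k)) (max b (u k)),
              ‖D k (Function.update (w k) k x) - D k u‖ ≤ ε₂ := by
            intro x hx
            rw [Real.norm_eq_abs]
            exact hKmod k _ (hupdmem x hx) u humem (hdistK x hx)
          have hmvt := (convex_Icc (min b (u k)) (max b (u k))).norm_image_sub_le_of_norm_hasDerivWithin_le
            hderiv hgb
            (⟨min_le_right _ _, le_max_right _ _⟩ : u k ∈ Icc (min b (u k)) (max b (u k)))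
            (⟨min_le_left _ _, le_max_left _ _⟩ : b ∈ Icc (min b (u k)) (max b (u k)))
          rw [Real.norm_eq_abs, Real.norm_eq_abs] at hmvt
          have heq2 : C (Function.update (w k) k b) - b * D k u
              - (C (Function.update (w k) k (u k)) - u k * D k u)
              = C (Function.update (w k) k b) - C (Function.update (w k) k (u k))
                + t n * (D k u * a) := by
            rw [hbdef]; ring
          rw [heq2] at hmvt
          apply le_trans hmvt
          calc ε₂ * |b - u k| ≤ ε₂ * (|t n| * Mα) :=
                mul_le_mul_of_nonneg_left hbuk hε₂.le
            _ = |t n| * (ε' / 2) := by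
                rw [hε₂def]
                field_simp
      rw [hCsucc, hCk]
      have hsplit : C (Function.update (w k) k (v k)) - C (Function.update (w k) k (u k))
          + t n * (D k u * a)
          = (C (Function.update (w k) k (v k)) - C (Function.update (w k) k b))
            + (C (Function.update (w k) k b) - C (Function.update (w k) k (u k))
              + t n * (D k u * a)) := by ring
      rw [hsplit]
      calc |(C (Function.update (w k) k (v k)) - C (Function.update (w k) k b))
            + (C (Function.update (w k) k b) - C (Function.update (w k) k (u k))
              + t n * (D k u * a))|
          ≤ |C (Function.update (w k) k (v k)) - C (Function.update (w k) k b)|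
            + |C (Function.update (w k) k b) - C (Function.update (w k) k (u k))
              + t n * (D k u * a)| := abs_add_le _ _
        _ ≤ 2 * η * |t n| + |t n| * (ε' / 2) := add_le_add hstep1 hmain2
        _ ≤ |t n| * ε' := by nlinarith [htpos.le, hηe, hε']
    -- sum up
    have htelesc : ∑ k : Fin d, (C (w ((k : ℕ) + 1)) - C (w (k : ℕ))) = C v - C u := by
      rw [Fin.sum_univ_eq_sum_range (fun m => C (w (m + 1)) - C (w m)) d,
        Finset.sum_range_sub (fun m => C (w m)) d, hw0, hwd]
    have hsum : C v - C u + t n * ∑ p, D p u * α 1 (margVec p (u p)) =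
        ∑ k : Fin d, (C (w ((k : ℕ) + 1)) - C (w (k : ℕ))
          + t n * (D k u * α 1 (margVec k (u k)))) := by
      rw [Finset.sum_add_distrib, htelesc, ← Finset.mul_sum]
    have hsumb : |C v - C u + t n * ∑ p, D p u * α 1 (margVec p (u p))|
        ≤ (d : ℝ) * (|t n| * ε') := by
      rw [hsum]
      calc |∑ k : Fin d, (C (w ((k : ℕ) + 1)) - C (w (k : ℕ))
            + t n * (D k u * α 1 (margVec k (u k))))|
          ≤ ∑ k : Fin d, |C (w ((k : ℕ) + 1)) - C (w (k : ℕ))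
            + t n * (D k u * α 1 (margVec k (u k)))| := Finset.abs_sum_le_sum_abs _ _
        _ ≤ ∑ _k : Fin d, |t n| * ε' := Finset.sum_le_sum fun k _ => hperk k
        _ = (d : ℝ) * (|t n| * ε') := by
            rw [Finset.sum_const, Finset.card_univ, Fintype.card_fin, nsmul_eq_mul]
    -- final algebra
    have hid : ((s * C v + t n * αn n s v - s * C u) / t n)
        - (α s u - s * ∑ p, D p u * α 1 (margVec p (u p)))
        = s * ((C v - C u + t n * ∑ p, D p u * α 1 (margVec p (u p))) / t n)
          + (αn n s v - α s u) := by
      have htne : t n ≠ 0 := ht0 n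
      field_simp
      ring
    rw [hid]
    have hs1 : |s| ≤ 1 := by rw [abs_of_nonneg hs.1]; exact hs.2
    calc |s * ((C v - C u + t n * ∑ p, D p u * α 1 (margVec p (u p))) / t n)
          + (αn n s v - α s u)|
        ≤ |s * ((C v - C u + t n * ∑ p, D p u * α 1 (margVec p (u p))) / t n)|
          + |αn n s v - α s u| := abs_add_le _ _
      _ ≤ 1 * (((d : ℝ) * (|t n| * ε')) / |t n|) + 2 * η := by
          apply add_le_add _ hT2
          rw [abs_mul, abs_div]
          apply mul_le_mul hs1 _ (by positivity) zero_le_one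
          exact (div_le_div_iff_of_pos_right htpos).2 hsumb
      _ = (d : ℝ) * ε' + 2 * η := by
          have htne' : |t n| ≠ 0 := ne_of_gt htpos
          field_simp
  haveI hne : Nonempty ↥dom :=
    ⟨⟨((0:ℝ), fun _ => (0:ℝ)), ⟨⟨le_refl 0, zero_le_one⟩, fun i _ => ⟨le_refl 0, zero_le_one⟩⟩⟩⟩
  rw [Real.dist_eq, sub_zero, abs_of_nonneg (Real.iSup_nonneg fun q => abs_nonneg _)]
  have hbound := ciSup_le fun q : ↥dom => hmain q.1.1 q.1.2 q.2.1 q.2.2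
  apply lt_of_le_of_lt hbound
  have hd1 : ((d:ℝ) + 1) * ε' = ε / 4 := by
    rw [hε'def]
    field_simp
  nlinarith [hε', hη, hηe]
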